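/- Combined prediction-error decrease for the nominal–estimate pair (eq. (16)): Let V_s be a function satisfying the i-ISS CLF decrease V_s(f_w(x,u,0), f_w(x̃, π(x̃,x,u), w̃)) ≤ ρ_s · V_s(x,x̃) + σ_{s,w}(‖w̃‖) with σ_{s,w} class-K (hence monotone). Suppose the observer update from estimate x̂ can be written as x̂⁺ = f_w(x̂, u, ŵ) for some ŵ ∈ ℝ^q whose norm is bounded by the observer-correction bound: ‖ŵ‖ ≤ c · (σ_{o,L}(V_o(x̂, x)) + σ_{o,L,w}(‖w‖)), with σ_{o,L}, σ_{o,L,w} class-K, c > 0, and ‖w‖ ≤ w̄. Then, defining the class-K functions σ_{s,o}(r) := σ_{s,w}(2c·σ_{o,L}(r)) and σ_{s,o,w}(r) := σ_{s,w}(2c·σ_{o,L,w}(r)), for every nominal state x̄ and nominal input ū, with u = π(x̂, x̄, ū), x̄⁺ = f_w(x̄, ū, 0) and x̂⁺ = f_w(x̂, u, ŵ): V_s(x̄⁺, x̂⁺) ≤ ρ_s · V_s(x̄, x̂) + σ_{s,o}(V_o(x̂, x)) + σ_{s,o,w}(w̄). -/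
import Mathlib


/-- A vector in `ℝ^n`. -/
abbrev Vec (n : ℕ) := EuclideanSpace ℝ (Fin n)

/-- A class-`𝒦` function: continuous, strictly increasing and vanishing at `0`
(considered on the nonnegative reals). -/
def ClassK (σ : ℝ → ℝ) : Prop :=
  ContinuousOn σ (Set.Ici 0) ∧ StrictMonoOn σ (Set.Ici 0) ∧ σ 0 = 0

lemma ClassK.mono {σ : ℝ → ℝ} (h : ClassK σ) {a b : ℝ} (ha : 0 ≤ a) (hab : a ≤ b) :
    σ a ≤ σ b :=
  h.2.1.monotoneOn ha (ha.trans hab) hab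

lemma ClassK.nonneg {σ : ℝ → ℝ} (h : ClassK σ) {a : ℝ} (ha : 0 ≤ a) : 0 ≤ σ a := by
  have := h.mono le_rfl ha
  rw [h.2.2] at this; exact this

lemma ClassK.subadd {σ : ℝ → ℝ} (h : ClassK σ) {a b : ℝ} (ha : 0 ≤ a) (hb : 0 ≤ b) :
    σ (a + b) ≤ σ (2 * a) + σ (2 * b) := by
  rcases le_total a b with hab | hab
  · have h1 : σ (a + b) ≤ σ (2 * b) := h.mono (by linarith) (by linarith)
    have h2 : 0 ≤ σ (2 * a) := h.nonneg (by linarith)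
    linarith
  · have h1 : σ (a + b) ≤ σ (2 * a) := h.mono (by linarith) (by linarith)
    have h2 : 0 ≤ σ (2 * b) := h.nonneg (by linarith)
    linarith

/-- Combined prediction-error decrease for the nominal–estimate pair (eq. (16)):
with `u = π(x̂, x̄, ū)`, nominal update `x̄⁺ = f_w(x̄, ū, 0)` and observer update
`x̂⁺ = f_w(x̂, u, ŵ)` where `‖ŵ‖ ≤ c (σ_{o,L}(V_o(x̂, x)) + σ_{o,L,w}(‖w‖))` and
`‖w‖ ≤ w̄`, one has
`V_s(x̄⁺, x̂⁺) ≤ ρ_s V_s(x̄, x̂) + σ_{s,o}(V_o(x̂, x)) + σ_{s,o,w}(w̄)` with the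
class-`𝒦` functions `σ_{s,o}(r) = σ_{s,w}(2c σ_{o,L}(r))` and
`σ_{s,o,w}(r) = σ_{s,w}(2c σ_{o,L,w}(r))`. -/
theorem combined_prediction_error_decrease
    {nx m q : ℕ}
    (fw : Vec nx → Vec m → Vec q → Vec nx)
    (Vs Vo : Vec nx → Vec nx → ℝ)
    (hVs_nonneg : ∀ a b, 0 ≤ Vs a b) (hVo_nonneg : ∀ a b, 0 ≤ Vo a b)
    (ρs : ℝ) (hρs : ρs ∈ Set.Ioo (0 : ℝ) 1)
    (σsw σoL σoLw : ℝ → ℝ)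
    (hσsw : ClassK σsw) (hσoL : ClassK σoL) (hσoLw : ClassK σoLw)
    (π : Vec nx → Vec nx → Vec m → Vec m)
    (hCLF : ∀ (x xt : Vec nx) (u : Vec m) (wt : Vec q),
      Vs (fw x u 0) (fw xt (π xt x u) wt) ≤ ρs * Vs x xt + σsw ‖wt‖)
    (c : ℝ) (hc : 0 < c)
    (wbar : ℝ) (hwbar : 0 ≤ wbar)
    (x xhat : Vec nx) (w : Vec q) (hwb : ‖w‖ ≤ wbar)
    (what : Vec q)
    (hwhat : ‖what‖ ≤ c * (σoL (Vo xhat x) + σoLw ‖w‖))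
    (xbar : Vec nx) (ubar : Vec m) :
    Vs (fw xbar ubar 0) (fw xhat (π xhat xbar ubar) what)
      ≤ ρs * Vs xbar xhat + σsw (2 * c * σoL (Vo xhat x))
        + σsw (2 * c * σoLw wbar) := by
  have hVoN : 0 ≤ Vo xhat x := hVo_nonneg _ _
  have hwN : (0:ℝ) ≤ ‖w‖ := norm_nonneg _
  have hA : 0 ≤ σoL (Vo xhat x) := hσoL.nonneg hVoN
  have hB : 0 ≤ σoLw ‖w‖ := hσoLw.nonneg hwN
  have key := hCLF xbar xhat ubar what
  have h1 : σsw ‖what‖ ≤ σsw (c * (σoL (Vo xhat x) + σoLw ‖w‖)) :=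
    hσsw.mono (norm_nonneg _) hwhat
  have h2 : σsw (c * (σoL (Vo xhat x) + σoLw ‖w‖))
      ≤ σsw (2 * (c * σoL (Vo xhat x))) + σsw (2 * (c * σoLw ‖w‖)) := by
    have := hσsw.subadd (a := c * σoL (Vo xhat x)) (b := c * σoLw ‖w‖)
      (by positivity) (by positivity)
    calc σsw (c * (σoL (Vo xhat x) + σoLw ‖w‖))
        = σsw (c * σoL (Vo xhat x) + c * σoLw ‖w‖) := by ring_nf
      _ ≤ _ := this
  have h3 : σsw (2 * (c * σoLw ‖w‖)) ≤ σsw (2 * c * σoLw wbar) := by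
    have hmono : σoLw ‖w‖ ≤ σoLw wbar := hσoLw.mono hwN hwb
    exact hσsw.mono (by positivity) (by nlinarith)
  have h4 : σsw (2 * (c * σoL (Vo xhat x))) = σsw (2 * c * σoL (Vo xhat x)) := by
    ring_nf
  linarith
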